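/- Let V be a finite set, b : V → ℝ with ∑_{v ∈ V} b(v) = 0 and ∑_{v ∈ V} max(b(v), 0) = 1, and r ∈ V. Let T ⊆ V with r ∈ T contain every vertex with b(v) > 0 and carry an in-tree parent function p_T : T∖{r} → T rooted at r; let U ⊆ V with r ∈ U contain every vertex with b(v) < 0 and carry an out-tree parent function p_U : U∖{r} → U rooted at r. For v ∈ U let D(v) = ∑_{w descendant of v in U} max(−b(w), 0), and let D(v) = 0 for v ∉ U. Let v_1, …, v_n be an enumeration of T∖{r} in leaf-to-root order (every vertex appears before its parent in T). Define s_0 : V → ℝ by s_0(v) = max(b(v), 0), and for k = 1, …, n define s_k from s_{k−1} by: letting x = min(s_{k−1}(v_k), 1 − D(v_k)), set s_k(v_k) = s_{k−1}(v_k) − x, set s_k(p_T(v_k)) = s_{k−1}(p_T(v_k)) + x, and let s_k agree with s_{k−1} on all other vertices. Then for every x ∈ U and every k with 0 ≤ k ≤ n, the sum of s_k(v) over those v ∈ {v_1, …, v_k} that are descendants of x in U is at most D(x). -/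

import Mathlib

/-- `u` is a descendant of `x` in the tree given by the parent function `p`
rooted at `r`: iterating `p` from `u` reaches `x` (without first leaving the
tree through the root `r`). Every vertex is a descendant of itself. -/
def IsDesc {V : Type*} (p : V → V) (r : V) (u x : V) : Prop :=
  ∃ k : ℕ, p^[k] u = x ∧ ∀ j < k, p^[j] u ≠ r

/-- Transitivity of the descendant relation. -/
theorem isDesc_trans {V : Type*} {p : V → V} {r w y x : V}
    (h1 : IsDesc p r w y) (h2 : IsDesc p r y x) : IsDesc p r w x := by
  obtain ⟨a, ha, ha'⟩ := h1
  obtain ⟨c, hc, hc'⟩ := h2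
  refine ⟨c + a, ?_, ?_⟩
  · rw [Function.iterate_add_apply, ha, hc]
  · intro j hj
    rcases lt_or_ge j a with h | h
    · exact ha' j h
    · have hij : p^[j] w = p^[j - a] (p^[a] w) := by
        rw [← Function.iterate_add_apply]
        congr 1
        omega
      rw [hij, ha]
      exact hc' (j - a) (by omega)

open Classical in
/-- Invariant of Step 2′ of the modified Goldberg–Rao algorithm: for every
vertex `x` of the out-tree `U`, the total residual supply left on already
processed vertices that are descendants of `x` in `U` is at most `D x`. -/
theorem stmt_3 {V : Type*} [Fintype V]
    (b : V → ℝ) (r : V) (T U : Finset V) (pT pU : V → V)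
    (n : ℕ) (v : Fin n → V) (D : V → ℝ) (s : ℕ → V → ℝ)
    (hbsum : ∑ u, b u = 0)
    (hsupply : ∑ u, max (b u) 0 = 1)
    (hrT : r ∈ T) (hrU : r ∈ U)
    (hTsupp : ∀ u, 0 < b u → u ∈ T)
    (hUdem : ∀ u, b u < 0 → u ∈ U)
    (hpT : ∀ u ∈ T, u ≠ r → pT u ∈ T)
    (hpTroot : ∀ u ∈ T, ∃ k : ℕ, pT^[k] u = r)
    (hpU : ∀ u ∈ U, u ≠ r → pU u ∈ U)
    (hpUroot : ∀ u ∈ U, ∃ k : ℕ, pU^[k] u = r)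
    (hD : ∀ u, D u = if u ∈ U then
      ∑ w ∈ Finset.univ.filter (fun w => w ∈ U ∧ IsDesc pU r w u), max (-b w) 0
      else 0)
    (hvinj : Function.Injective v)
    (hvmem : ∀ i, v i ∈ T ∧ v i ≠ r)
    (hvsurj : ∀ u ∈ T, u ≠ r → ∃ i, v i = u)
    (horder : ∀ i j : Fin n, pT (v i) = v j → i < j)
    (hs0 : ∀ u, s 0 u = max (b u) 0)
    (hstep : ∀ i : Fin n,
      s ((i : ℕ) + 1) (v i) = s i (v i) - min (s i (v i)) (1 - D (v i)) ∧
      s ((i : ℕ) + 1) (pT (v i)) = s i (pT (v i)) + min (s i (v i)) (1 - D (v i)) ∧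
      ∀ u, u ≠ v i → u ≠ pT (v i) → s ((i : ℕ) + 1) u = s i u) :
    ∀ x ∈ U, ∀ k ≤ n,
      ∑ i ∈ Finset.univ.filter
          (fun i : Fin n => (i : ℕ) < k ∧ v i ∈ U ∧ IsDesc pU r (v i) x),
        s k (v i) ≤ D x := by
  classical
  -- total demand is 1
  have hdemsum : ∑ u, max (-b u) 0 = 1 := by
    have hpt : ∀ u : V, max (-b u) 0 = max (b u) 0 - b u := by
      intro u
      rcases le_total (b u) 0 with h | h
      · rw [max_eq_left (neg_nonneg.2 h), max_eq_right h]
        ring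
      · rw [max_eq_right (neg_nonpos.2 h), max_eq_left h]
        ring
    rw [Finset.sum_congr rfl (fun u _ => hpt u), Finset.sum_sub_distrib, hsupply, hbsum]
    ring
  have hDnonneg : ∀ x, 0 ≤ D x := by
    intro x
    rw [hD]
    split
    · exact Finset.sum_nonneg fun _ _ => le_max_right _ _
    · exact le_rfl
  have hDle1 : ∀ x, D x ≤ 1 := by
    intro x
    rw [hD]
    split
    · calc ∑ w ∈ Finset.univ.filter (fun w => w ∈ U ∧ IsDesc pU r w x), max (-b w) 0
          ≤ ∑ w, max (-b w) 0 :=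
            Finset.sum_le_sum_of_subset_of_nonneg (Finset.filter_subset _ _)
              (fun _ _ _ => le_max_right _ _)
        _ = 1 := hdemsum
    · norm_num
  have hDmono : ∀ y x, y ∈ U → x ∈ U → IsDesc pU r y x → D y ≤ D x := by
    intro y x hy hx hd
    rw [hD y, hD x, if_pos hy, if_pos hx]
    apply Finset.sum_le_sum_of_subset_of_nonneg
    · intro w hw
      simp only [Finset.mem_filter, Finset.mem_univ, true_and] at hw ⊢
      exact ⟨hw.1, isDesc_trans hw.2 hd⟩
    · intros
      exact le_max_right _ _
  -- the parent of a processed vertex cannot have been processed before it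
  have hpar : ∀ i j : Fin n, (j : ℕ) ≤ (i : ℕ) → v j ≠ pT (v i) := by
    intro i j hji heq
    have := horder i j heq.symm
    omega
  have hnei : ∀ i : Fin n, v i ≠ pT (v i) := fun i => hpar i i le_rfl
  -- nonnegativity and conservation of supply
  have key : ∀ k, k ≤ n → (∀ u, 0 ≤ s k u) ∧ (∑ u, s k u = 1) := by
    intro k
    induction k with
    | zero =>
      intro _
      constructor
      · intro u
        rw [hs0]
        exact le_max_right _ _
      · rw [Finset.sum_congr rfl (fun u _ => hs0 u)]
        exact hsupply
    | succ k ih =>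
      intro hk
      obtain ⟨ihn, iht⟩ := ih (by omega)
      have hkn : k < n := hk
      set i : Fin n := ⟨k, hkn⟩ with hidef
      obtain ⟨h1, h2, h3⟩ := hstep i
      have hiv : (i : ℕ) = k := rfl
      rw [hiv] at h1 h2 h3
      set m : ℝ := min (s k (v i)) (1 - D (v i)) with hm
      have hm0 : 0 ≤ m := le_min (ihn _) (by linarith [hDle1 (v i)])
      have hpt : ∀ u, s (k + 1) u =
          s k u + (if u = pT (v i) then m else 0) - (if u = v i then m else 0) := by
        intro u
        by_cases h : u = v i
        · subst h
          rw [h1, if_neg (hnei i), if_pos rfl]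
          ring
        · by_cases h' : u = pT (v i)
          · subst h'
            rw [h2, if_pos rfl, if_neg h]
            ring
          · rw [h3 u h h', if_neg h', if_neg h]
            ring
      constructor
      · intro u
        rw [hpt u]
        by_cases h : u = v i
        · have hms : m ≤ s k u := by
            rw [h, hm]
            exact min_le_left _ _
          rw [if_pos h]
          split_ifs <;> linarith [ihn u]
        · rw [if_neg h]
          split_ifs <;> linarith [ihn u]
      · rw [Finset.sum_congr rfl (fun u _ => hpt u), Finset.sum_sub_distrib,
          Finset.sum_add_distrib, iht, Finset.sum_ite_eq' Finset.univ (pT (v i)) (fun _ => m),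
          Finset.sum_ite_eq' Finset.univ (v i) (fun _ => m)]
        simp
  -- main invariant
  have main : ∀ k, k ≤ n → ∀ x, x ∈ U →
      ∑ i ∈ Finset.univ.filter
          (fun i : Fin n => (i : ℕ) < k ∧ v i ∈ U ∧ IsDesc pU r (v i) x),
        s k (v i) ≤ D x := by
    intro k
    induction k with
    | zero =>
      intro _ x hx
      simp only [Nat.not_lt_zero, false_and, Finset.filter_false, Finset.sum_empty]
      exact hDnonneg x
    | succ k ih =>
      intro hk x hx
      have hkn : k < n := hk
      have ih' := ih (by omega) x hx
      set i : Fin n := ⟨k, hkn⟩ with hidef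
      obtain ⟨h1, h2, h3⟩ := hstep i
      have hiv : (i : ℕ) = k := rfl
      rw [hiv] at h1 h2 h3
      obtain ⟨hnn, htot⟩ := key k (by omega)
      -- processed vertices keep their value at this step
      have hold : ∀ j : Fin n, (j : ℕ) < k → s (k + 1) (v j) = s k (v j) := by
        intro j hj
        apply h3
        · intro he
          have : j = i := hvinj he
          have : (j : ℕ) = k := by rw [this]
          omega
        · exact hpar i j (by omega)
      by_cases hP : v i ∈ U ∧ IsDesc pU r (v i) x
      · have hset : Finset.univ.filter
            (fun j : Fin n => (j : ℕ) < k + 1 ∧ v j ∈ U ∧ IsDesc pU r (v j) x) =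
            insert i (Finset.univ.filter
              (fun j : Fin n => (j : ℕ) < k ∧ v j ∈ U ∧ IsDesc pU r (v j) x)) := by
          ext j
          simp only [Finset.mem_filter, Finset.mem_insert, Finset.mem_univ, true_and]
          constructor
          · rintro ⟨hj, hj2⟩
            rcases Nat.lt_succ_iff_lt_or_eq.mp hj with h | h
            · right; exact ⟨h, hj2⟩
            · left; exact Fin.ext h
          · rintro (h | ⟨hj, hj2⟩)
            · subst h
              exact ⟨Nat.lt_succ_self k, hP⟩
            · exact ⟨by omega, hj2⟩
        have hxold : i ∉ Finset.univ.filter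
            (fun j : Fin n => (j : ℕ) < k ∧ v j ∈ U ∧ IsDesc pU r (v j) x) := by
          simp only [Finset.mem_filter, Finset.mem_univ, true_and, hiv]
          intro h
          omega
        rw [hset, Finset.sum_insert hxold,
          Finset.sum_congr rfl (fun j hj => hold j ((Finset.mem_filter.mp hj).2.1)), h1]
        rcases le_total (s k (v i)) (1 - D (v i)) with hc | hc
        · rw [min_eq_left hc]
          linarith
        · rw [min_eq_right hc]
          have hDm : D (v i) ≤ D x := hDmono (v i) x hP.1 hx hP.2
          have hsum1 : ∑ j ∈ insert i (Finset.univ.filter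
              (fun j : Fin n => (j : ℕ) < k ∧ v j ∈ U ∧ IsDesc pU r (v j) x)),
              s k (v j) ≤ 1 := by
            have himg : ∑ j ∈ insert i (Finset.univ.filter
                (fun j : Fin n => (j : ℕ) < k ∧ v j ∈ U ∧ IsDesc pU r (v j) x)), s k (v j) =
                ∑ u ∈ (insert i (Finset.univ.filter
                  (fun j : Fin n => (j : ℕ) < k ∧ v j ∈ U ∧ IsDesc pU r (v j) x))).image v,
                  s k u :=
              (Finset.sum_image (fun a _ c _ h => hvinj h)).symm
            rw [himg, ← htot]
            exact Finset.sum_le_sum_of_subset_of_nonneg (Finset.subset_univ _)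
              (fun u _ _ => hnn u)
          rw [Finset.sum_insert hxold] at hsum1
          linarith
      · have hset : Finset.univ.filter
            (fun j : Fin n => (j : ℕ) < k + 1 ∧ v j ∈ U ∧ IsDesc pU r (v j) x) =
            Finset.univ.filter
              (fun j : Fin n => (j : ℕ) < k ∧ v j ∈ U ∧ IsDesc pU r (v j) x) := by
          ext j
          simp only [Finset.mem_filter, Finset.mem_univ, true_and]
          constructor
          · rintro ⟨hj, hj2⟩
            rcases Nat.lt_succ_iff_lt_or_eq.mp hj with h | h
            · exact ⟨h, hj2⟩
            · have hji : j = i := Fin.ext (by omega)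
              exact absurd hj2 (by rw [hji]; exact hP)
          · rintro ⟨hj, hj2⟩
            exact ⟨by omega, hj2⟩
        rw [hset, Finset.sum_congr rfl (fun j hj => hold j ((Finset.mem_filter.mp hj).2.1))]
        exact ih'
  intro x hx k hk
  exact main k hk x hx
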